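/- Let K be a second countable compact topological group with Haar probability measure μ, let K₀ ≤ K be a closed subgroup, and let λ : K → K/K₀ be the map sending x to its left coset xK₀. If 𝒰 ⊆ K is a Borel set with μ(𝒰) > 0 such that the restriction of λ to 𝒰 is finite-to-one (each fiber λ⁻¹(y) ∩ 𝒰 is finite), then K₀ is finite. -/

import Mathlib

open MeasureTheory
open scoped Pointwise

/-- If `K` is a second countable compact group with Haar probability measure `μ`,
`K₀ ≤ K` is a closed subgroup, `𝒰 ⊆ K` is a Borel set of positive measure on which the
coset map `K → K/K₀` is finite-to-one, then `K₀` is finite. -/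
theorem finite_subgroup_of_finite_to_one_on_nonnull
    {K : Type*} [Group K] [TopologicalSpace K] [IsTopologicalGroup K]
    [CompactSpace K] [SecondCountableTopology K]
    [MeasurableSpace K] [BorelSpace K]
    (μ : Measure K) [μ.IsHaarMeasure] [IsProbabilityMeasure μ]
    (K₀ : Subgroup K) (hK₀ : IsClosed (K₀ : Set K))
    (𝒰 : Set K) (h𝒰 : MeasurableSet 𝒰) (hpos : 0 < μ 𝒰)
    (hfin : ∀ y : K ⧸ K₀, (𝒰 ∩ QuotientGroup.mk ⁻¹' {y}).Finite) :
    Finite K₀ := by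
  by_contra hKfin
  rw [not_finite_iff_infinite] at hKfin
  haveI : CompactSpace K₀ := isCompact_iff_compactSpace.mp hK₀.isCompact
  haveI : BorelSpace K₀ := Subtype.borelSpace _
  -- the closure of the trivial subgroup
  set N : Subgroup K := (⊥ : Subgroup K).topologicalClosure with hN
  have hNcl : IsClosed (N : Set K) := Subgroup.isClosed_topologicalClosure _
  have hNset : (N : Set K) = closure ({1} : Set K) := by
    rw [hN, Subgroup.topologicalClosure_coe, Subgroup.coe_bot]
  -- N is contained in every open neighborhood of 1
  have hNnhds : ∀ V : Set K, IsOpen V → (1 : K) ∈ V → (N : Set K) ⊆ V := by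
    intro V hV h1V y hy
    have hyinv : y⁻¹ ∈ closure ({1} : Set K) := by
      rw [← hNset]; exact N.inv_mem hy
    obtain ⟨z, hzW, hz1⟩ := mem_closure_iff.mp hyinv ((fun z => y * z) ⁻¹' V)
      (hV.preimage (continuous_mul_left y)) (by simp [h1V])
    rw [Set.mem_singleton_iff] at hz1
    subst hz1
    simpa using hzW
  -- N ⊆ K₀
  have hNK₀ : (N : Set K) ⊆ (K₀ : Set K) := by
    rw [hNset]
    have : closure ({1} : Set K) ⊆ closure (K₀ : Set K) :=
      closure_mono (Set.singleton_subset_iff.mpr K₀.one_mem)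
    rwa [hK₀.closure_eq] at this
  -- every Borel set is invariant under right multiplication by N
  have hBorelInv : ∀ x ∈ 𝒰, ∀ n ∈ (N : Set K), x * n ∈ 𝒰 := by
    have : ∀ ⦃s : Set K⦄, MeasurableSet s → ∀ x ∈ s, ∀ n ∈ (N : Set K), x * n ∈ s := by
      refine MeasurableSet.induction_on_open ?_ ?_ ?_
      · intro U hU x hx n hn
        exact hNnhds ((fun z => x * z) ⁻¹' U) (hU.preimage (continuous_mul_left x))
          (by simpa using hx) hn
      · intro t _ hC x hx n hn
        intro hmem
        exact hx (by simpa using hC (x * n) hmem n⁻¹ (N.inv_mem hn))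
      · intro f _ _ hC x hx n hn
        rcases Set.mem_iUnion.mp hx with ⟨i, hi⟩
        exact Set.mem_iUnion.mpr ⟨i, hC i x hi n hn⟩
    exact this h𝒰
  -- N is finite, since it embeds into a fiber
  have hNfin : (N : Set K).Finite := by
    obtain ⟨x, hx⟩ := nonempty_of_measure_ne_zero hpos.ne'
    have hsub : (N : Set K) ⊆
        (fun n => x * n) ⁻¹' (𝒰 ∩ QuotientGroup.mk ⁻¹' {(QuotientGroup.mk x : K ⧸ K₀)}) := by
      intro n hn
      refine ⟨hBorelInv x hx n hn, ?_⟩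
      simpa using QuotientGroup.mk_mul_of_mem x (hNK₀ hn)
    exact (((hfin _).preimage (mul_right_injective x).injOn).subset hsub)
  -- Haar measure on K₀
  let ν : Measure K₀ := Measure.haar
  haveI : IsFiniteMeasure ν := inferInstance
  -- the subgroup of K₀ corresponding to N
  set M : Subgroup K₀ := N.comap K₀.subtype with hM
  have hMset : (M : Set K₀) = Subtype.val ⁻¹' (N : Set K) := rfl
  have hMsetfin : (M : Set K₀).Finite := by
    rw [hMset]; exact hNfin.preimage Subtype.val_injective.injOn
  have hMcl : IsClosed (M : Set K₀) := by
    rw [hMset]; exact hNcl.preimage continuous_subtype_val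
  haveI : Finite M := hMsetfin.to_subtype
  haveI : Infinite (K₀ ⧸ M) := by
    by_contra h
    rw [not_infinite_iff_finite] at h
    haveI := h
    haveI : Finite K₀ := Finite.of_equiv _ (Subgroup.groupEquivQuotientProdSubgroup (s := M)).symm
    exact not_finite K₀
  -- cosets of M all have the same measure
  have hcoset : ∀ k : K₀, ν (k • (M : Set K₀)) = ν (M : Set K₀) := by
    intro k
    have : k • (M : Set K₀) = (fun h => k⁻¹ * h) ⁻¹' (M : Set K₀) := by
      ext a
      simp [Set.mem_smul_set_iff_inv_smul_mem]
    rw [this, measure_preimage_mul]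
  -- M is null
  have hM0 : ν (M : Set K₀) = 0 := by
    by_contra h0
    set e := Infinite.natEmbedding (K₀ ⧸ M) with he
    set g : ℕ → K₀ := fun n => Quotient.out (e n) with hg
    have hgmk : ∀ n, (QuotientGroup.mk (g n) : K₀ ⧸ M) = e n := fun n => QuotientGroup.out_eq' _
    have hmemmk : ∀ (k : K₀) (a : K₀), a ∈ k • (M : Set K₀) →
        (QuotientGroup.mk a : K₀ ⧸ M) = QuotientGroup.mk k := by
      intro k a ha
      rcases ha with ⟨m, hm, rfl⟩
      exact QuotientGroup.mk_mul_of_mem k hm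
    have hdisj : Pairwise (Function.onFun Disjoint fun n => g n • (M : Set K₀)) := by
      intro i j hij
      rw [Function.onFun, Set.disjoint_left]
      intro a hai haj
      apply hij
      apply e.injective
      rw [← hgmk i, ← hgmk j, ← hmemmk _ _ hai, ← hmemmk _ _ haj]
    have hmeas : ∀ n, MeasurableSet (g n • (M : Set K₀)) := fun n =>
      (hMcl.smul (g n)).measurableSet
    have htot := measure_iUnion (μ := ν) hdisj hmeas
    have hsum : ∑' n : ℕ, ν (g n • (M : Set K₀)) = ⊤ := by
      have : ∀ n : ℕ, ν (g n • (M : Set K₀)) = ν (M : Set K₀) := fun n => hcoset (g n)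
      rw [tsum_congr this]
      exact ENNReal.tsum_const_eq_top_of_ne_zero h0
    rw [hsum] at htot
    exact absurd htot (by
      intro h
      have := measure_mono (μ := ν) (Set.subset_univ (⋃ n, g n • (M : Set K₀)))
      rw [h] at this
      exact absurd (lt_of_le_of_lt this (measure_lt_top ν _)) (lt_irrefl _))
  -- every finite subset of K₀ is null
  have hfinnull : ∀ s : Set K₀, s.Finite → ν s = 0 := by
    intro s hs
    have hsub : s ⊆ ⋃ x ∈ s, x • (M : Set K₀) := by
      intro x hx
      exact Set.mem_biUnion hx ⟨1, M.one_mem, mul_one x⟩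
    refine measure_mono_null hsub ?_
    rw [measure_biUnion_null_iff hs.countable]
    intro x _
    rw [hcoset]
    exact hM0
  -- μ is right invariant
  haveI hri : μ.IsMulRightInvariant := by
    constructor
    intro g
    set μ' := Measure.map (· * g) μ with hμ'
    haveI : μ'.IsMulLeftInvariant := by rw [hμ']; infer_instance
    haveI : IsProbabilityMeasure μ' :=
      Measure.isProbabilityMeasure_map (measurable_mul_const g).aemeasurable
    have heq : μ' = Measure.haarScalarFactor μ' μ • μ :=
      Measure.isMulInvariant_eq_smul_of_compactSpace μ' μ
    have huniv := congrArg (fun m : Measure K => m Set.univ) heq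
    simp only [measure_univ, Measure.smul_apply, smul_eq_mul, mul_one] at huniv
    have hc : Measure.haarScalarFactor μ' μ = 1 := by
      have h := huniv.symm
      rw [ENNReal.smul_def, smul_eq_mul, mul_one, ENNReal.coe_eq_one] at h
      exact h
    rw [heq, hc, one_smul]
  -- the function to integrate
  set f : K × K₀ → ENNReal := fun p => 𝒰.indicator 1 (p.1 * (p.2 : K)) with hf
  have hm : Measurable fun p : K × K₀ => p.1 * (p.2 : K) :=
    (continuous_fst.mul (continuous_subtype_val.comp continuous_snd)).measurable
  have hfm : Measurable f := (measurable_one.indicator h𝒰).comp hm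
  -- first computation: iterated integral, inner over K₀, is 0
  have h1 : ∫⁻ p, f p ∂(μ.prod ν) = 0 := by
    rw [lintegral_prod f hfm.aemeasurable]
    have hz : ∀ x : K, ∫⁻ k : K₀, f (x, k) ∂ν = 0 := by
      intro x
      have hset : (fun k : K₀ => x * (k : K)) ⁻¹' 𝒰 ⊆
          (fun k : K₀ => x * (k : K)) ⁻¹'
            (𝒰 ∩ QuotientGroup.mk ⁻¹' {(QuotientGroup.mk x : K ⧸ K₀)}) := by
        intro k hk
        refine ⟨hk, ?_⟩
        simpa using QuotientGroup.mk_mul_of_mem x k.2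
      have hsf : ((fun k : K₀ => x * (k : K)) ⁻¹' 𝒰).Finite := by
        refine ((hfin _).preimage ?_).subset hset
        intro a _ b _ hab
        exact Subtype.ext (mul_left_cancel hab)
      calc ∫⁻ k : K₀, f (x, k) ∂ν
          = ∫⁻ k : K₀, ((fun k : K₀ => x * (k : K)) ⁻¹' 𝒰).indicator 1 k ∂ν := by
            apply lintegral_congr
            intro k
            rfl
        _ = ν ((fun k : K₀ => x * (k : K)) ⁻¹' 𝒰) := by
            rw [lintegral_indicator]
            · simp
            · exact (continuous_const.mul continuous_subtype_val).measurable h𝒰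
        _ = 0 := hfinnull _ hsf
    simp only [hz, lintegral_zero]
  -- second computation: iterated integral, inner over K, is μ 𝒰
  have h2 : ∫⁻ p, f p ∂(μ.prod ν) = μ 𝒰 * ν Set.univ := by
    rw [lintegral_prod_symm f hfm.aemeasurable]
    have hz : ∀ k : K₀, ∫⁻ x : K, f (x, k) ∂μ = μ 𝒰 := by
      intro k
      calc ∫⁻ x : K, f (x, k) ∂μ
          = ∫⁻ x : K, ((· * (k : K)) ⁻¹' 𝒰).indicator 1 x ∂μ := by
            apply lintegral_congr
            intro x
            rfl
        _ = μ ((· * (k : K)) ⁻¹' 𝒰) := by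
            rw [lintegral_indicator]
            · simp
            · exact (measurable_mul_const _) h𝒰
        _ = μ 𝒰 := measure_preimage_mul_right μ _ 𝒰
    simp only [hz, lintegral_const, measure_univ]
  rw [h1] at h2
  have hν : 0 < ν Set.univ := isOpen_univ.measure_pos ν Set.univ_nonempty
  have : (0 : ENNReal) < μ 𝒰 * ν Set.univ := ENNReal.mul_pos hpos.ne' hν.ne'
  rw [← h2] at this
  exact lt_irrefl 0 this
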